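/- Assume the feasible family F is nonempty, and let 𝓑 be the collection of all inclusion-maximal sets in F. If B₁, B₂ ∈ 𝓑 and x ∈ B₁ \ B₂, then there exists y ∈ B₂ \ B₁ such that (B₁ \ {x}) ∪ {y} ∈ 𝓑. -/

import Mathlib

open Finset

/-- The feasible family `F`: subsets of `V` of size at most `k` whose intersection with
each color class `Vc c` has cardinality between `ℓ c` and `u c`. -/
def Feasible {α : Type*} [DecidableEq α] {C : ℕ} (V : Finset α) (Vc : Fin C → Finset α)
    (ℓ u : Fin C → ℕ) (k : ℕ) (S : Finset α) : Prop :=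
  S ⊆ V ∧ S.card ≤ k ∧ ∀ c, ℓ c ≤ (S ∩ Vc c).card ∧ (S ∩ Vc c).card ≤ u c

/-- A set is extendable if it is contained in some feasible set. -/
def Extendable {α : Type*} [DecidableEq α] {C : ℕ} (V : Finset α) (Vc : Fin C → Finset α)
    (ℓ u : Fin C → ℕ) (k : ℕ) (S : Finset α) : Prop :=
  ∃ S', Feasible V Vc ℓ u k S' ∧ S ⊆ S'

/-- `B` is an inclusion-maximal member of the feasible family `F`. -/
def MaximalFeasible {α : Type*} [DecidableEq α] {C : ℕ} (V : Finset α) (Vc : Fin C → Finset α)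
    (ℓ u : Fin C → ℕ) (k : ℕ) (B : Finset α) : Prop :=
  Feasible V Vc ℓ u k B ∧ ∀ B', Feasible V Vc ℓ u k B' → B ⊆ B' → B' = B

section Aux

variable {α : Type*} [DecidableEq α] {C : ℕ} {V : Finset α} {Vc : Fin C → Finset α}
  {ℓ u : Fin C → ℕ} {k : ℕ}

lemma card_eq_sum_inter (hV : V = Finset.univ.biUnion Vc)
    (hdisj : ∀ c d : Fin C, c ≠ d → Disjoint (Vc c) (Vc d))
    {S : Finset α} (hS : S ⊆ V) :
    S.card = ∑ c, (S ∩ Vc c).card := by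
  have hS' : S = Finset.univ.biUnion (fun c => S ∩ Vc c) := by
    ext a
    simp only [mem_biUnion, mem_inter, mem_univ, true_and]
    constructor
    · intro ha
      have h2 := hS ha
      rw [hV] at h2
      simp only [mem_biUnion, mem_univ, true_and] at h2
      obtain ⟨c, hc⟩ := h2
      exact ⟨c, ha, hc⟩
    · rintro ⟨c, ha, _⟩; exact ha
  conv_lhs => rw [hS']
  exact Finset.card_biUnion (fun c _ d _ hcd =>
    Finset.disjoint_of_subset_left inter_subset_right
      (Finset.disjoint_of_subset_right inter_subset_right (hdisj c d hcd)))

lemma feasible_card_le (hV : V = Finset.univ.biUnion Vc)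
    (hdisj : ∀ c d : Fin C, c ≠ d → Disjoint (Vc c) (Vc d))
    {S : Finset α} (hS : Feasible V Vc ℓ u k S) :
    S.card ≤ min k (∑ c, min (u c) (Vc c).card) := by
  refine le_min hS.2.1 ?_
  rw [card_eq_sum_inter hV hdisj hS.1]
  exact Finset.sum_le_sum fun c _ =>
    le_min (hS.2.2 c).2 (card_le_card inter_subset_right)

lemma maximal_card_eq (hV : V = Finset.univ.biUnion Vc)
    (hdisj : ∀ c d : Fin C, c ≠ d → Disjoint (Vc c) (Vc d))
    {B : Finset α} (hB : MaximalFeasible V Vc ℓ u k B) :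
    B.card = min k (∑ c, min (u c) (Vc c).card) := by
  refine le_antisymm (feasible_card_le hV hdisj hB.1) ?_
  by_contra h
  push_neg at h
  have hk : B.card < k := lt_of_lt_of_le h (min_le_left _ _)
  have hsum : ∑ c, (B ∩ Vc c).card < ∑ c, min (u c) (Vc c).card := by
    rw [← card_eq_sum_inter hV hdisj hB.1.1]
    exact lt_of_lt_of_le h (min_le_right _ _)
  obtain ⟨c, _, hc⟩ := Finset.exists_lt_of_sum_lt hsum
  have hcu : (B ∩ Vc c).card < u c := lt_of_lt_of_le hc (min_le_left _ _)
  have hcV : (B ∩ Vc c).card < (Vc c).card := lt_of_lt_of_le hc (min_le_right _ _)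
  have hns : ¬ Vc c ⊆ B ∩ Vc c := fun h => absurd (card_le_card h) (not_le.mpr hcV)
  obtain ⟨y, hyV, hyB⟩ := Finset.not_subset.mp hns
  have hyB' : y ∉ B := fun h' => hyB (mem_inter.mpr ⟨h', hyV⟩)
  have hfeas : Feasible V Vc ℓ u k (insert y B) := by
    refine ⟨?_, ?_, ?_⟩
    · intro a ha
      rcases mem_insert.mp ha with rfl | ha
      · rw [hV]; exact mem_biUnion.mpr ⟨c, mem_univ _, hyV⟩
      · exact hB.1.1 ha
    · rw [card_insert_of_notMem hyB']; omega
    · intro d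
      by_cases hyd : y ∈ Vc d
      · have hdc : d = c := by
          by_contra hdc
          exact Finset.disjoint_left.mp (hdisj d c hdc) hyd hyV
        subst hdc
        rw [Finset.insert_inter_of_mem hyd, card_insert_of_notMem hyB]
        exact ⟨le_trans (hB.1.2.2 d).1 (Nat.le_succ _), hcu⟩
      · rw [Finset.insert_inter_of_notMem hyd]
        exact hB.1.2.2 d
  have := hB.2 _ hfeas (subset_insert _ _)
  exact hyB' (this ▸ mem_insert_self y B)

lemma maximal_of_card (hV : V = Finset.univ.biUnion Vc)
    (hdisj : ∀ c d : Fin C, c ≠ d → Disjoint (Vc c) (Vc d))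
    {S : Finset α} (hS : Feasible V Vc ℓ u k S)
    (hcard : S.card = min k (∑ c, min (u c) (Vc c).card)) :
    MaximalFeasible V Vc ℓ u k S :=
  ⟨hS, fun B' hB' hsub =>
    (Finset.eq_of_subset_of_card_le hsub (hcard ▸ feasible_card_le hV hdisj hB')).symm⟩

end Aux

/-- Basis exchange property for the inclusion-maximal sets of the feasible family. -/
theorem maximal_feasible_exchange {α : Type*} [DecidableEq α] (C : ℕ) (V : Finset α)
    (Vc : Fin C → Finset α)
    (hV : V = Finset.univ.biUnion Vc)
    (hdisj : ∀ c d : Fin C, c ≠ d → Disjoint (Vc c) (Vc d))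
    (ℓ u : Fin C → ℕ) (hlu : ∀ c, ℓ c ≤ u c) (k : ℕ)
    (hne : ∃ S, Feasible V Vc ℓ u k S)
    (B₁ B₂ : Finset α)
    (hB₁ : MaximalFeasible V Vc ℓ u k B₁)
    (hB₂ : MaximalFeasible V Vc ℓ u k B₂)
    (x : α) (hx : x ∈ B₁ \ B₂) :
    ∃ y ∈ B₂ \ B₁, MaximalFeasible V Vc ℓ u k (insert y (B₁.erase x)) := by
  obtain ⟨hx1, hx2⟩ := mem_sdiff.mp hx
  set N := min k (∑ c, min (u c) (Vc c).card) with hN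
  have hc1 : B₁.card = N := maximal_card_eq hV hdisj hB₁
  have hc2 : B₂.card = N := maximal_card_eq hV hdisj hB₂
  -- color of x
  have hxV : x ∈ V := hB₁.1.1 hx1
  rw [hV] at hxV
  obtain ⟨c₀, _, hxc₀⟩ := mem_biUnion.mp hxV
  set B' := B₁.erase x with hB'
  have hB'sub : B' ⊆ B₁ := erase_subset _ _
  have hxB' : x ∉ B' := notMem_erase _ _
  have hB'card : B'.card = B₁.card - 1 := card_erase_of_mem hx1
  -- color counts of B'
  have hinter : ∀ c, B' ∩ Vc c = (B₁ ∩ Vc c).erase x := fun c => Finset.erase_inter x B₁ (Vc c)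
  have hinter_ne : ∀ c, c ≠ c₀ → B' ∩ Vc c = B₁ ∩ Vc c := by
    intro c hc
    rw [hinter c]
    apply Finset.erase_eq_of_notMem
    rw [mem_inter]
    rintro ⟨-, hxc⟩
    exact Finset.disjoint_left.mp (hdisj c c₀ hc) hxc hxc₀
  have hxB₁c₀ : x ∈ B₁ ∩ Vc c₀ := mem_inter.mpr ⟨hx1, hxc₀⟩
  have hinter_c₀ : (B' ∩ Vc c₀).card = (B₁ ∩ Vc c₀).card - 1 := by
    rw [hinter c₀, card_erase_of_mem hxB₁c₀]
  have hpos : 0 < (B₁ ∩ Vc c₀).card := card_pos.mpr ⟨x, hxB₁c₀⟩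
  have hb1pos : 0 < B₁.card := card_pos.mpr ⟨x, hx1⟩
  by_cases hcaseA : ∃ y ∈ B₂ ∩ Vc c₀, y ∉ B₁
  · -- Case A: exchange within color c₀
    obtain ⟨y, hy, hyB₁⟩ := hcaseA
    obtain ⟨hyB₂, hyc₀⟩ := mem_inter.mp hy
    have hyB' : y ∉ B' := fun h => hyB₁ (hB'sub h)
    refine ⟨y, mem_sdiff.mpr ⟨hyB₂, hyB₁⟩, ?_⟩
    have hcard : (insert y B').card = N := by
      rw [card_insert_of_notMem hyB', hB'card]
      omega
    refine maximal_of_card hV hdisj ⟨?_, ?_, ?_⟩ hcard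
    · intro a ha
      rcases mem_insert.mp ha with rfl | ha
      · exact hB₂.1.1 hyB₂
      · exact hB₁.1.1 (hB'sub ha)
    · rw [hcard]; exact min_le_left _ _
    · intro d
      by_cases hyd : y ∈ Vc d
      · have hdc : d = c₀ := by
          by_contra hdc
          exact Finset.disjoint_left.mp (hdisj d c₀ hdc) hyd hyc₀
        subst hdc
        have hynotin : y ∉ B' ∩ Vc d := fun h => hyB' (mem_inter.mp h).1
        rw [Finset.insert_inter_of_mem hyd, card_insert_of_notMem hynotin, hinter_c₀]
        have := hB₁.1.2.2 d
        constructor <;> omega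
      · rw [Finset.insert_inter_of_notMem hyd]
        by_cases hdc : d = c₀
        · subst hdc; exact absurd hyc₀ hyd
        · rw [hinter_ne d hdc]; exact hB₁.1.2.2 d
  · -- Case B: B₂ ∩ Vc c₀ ⊆ B₁, so lower bound at c₀ is slack
    push_neg at hcaseA
    have hsub2 : B₂ ∩ Vc c₀ ⊆ B' := by
      intro a ha
      have haB₁ : a ∈ B₁ := hcaseA a ha
      have hax : a ≠ x := fun h => hx2 (h ▸ (mem_inter.mp ha).1)
      exact mem_erase.mpr ⟨hax, haB₁⟩
    have hsub2' : B₂ ∩ Vc c₀ ⊆ B' ∩ Vc c₀ :=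
      fun a ha => mem_inter.mpr ⟨hsub2 ha, (mem_inter.mp ha).2⟩
    have hslack : ℓ c₀ < (B₁ ∩ Vc c₀).card := by
      have h1 : (B₂ ∩ Vc c₀).card ≤ (B' ∩ Vc c₀).card := card_le_card hsub2'
      have h2 := (hB₂.1.2.2 c₀).1
      omega
    -- B' is feasible
    have hB'feas : Feasible V Vc ℓ u k B' := by
      refine ⟨fun a ha => hB₁.1.1 (hB'sub ha), le_trans (card_le_card hB'sub) hB₁.1.2.1, ?_⟩
      intro d
      by_cases hdc : d = c₀
      · subst hdc
        rw [hinter_c₀]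
        have := (hB₁.1.2.2 d).2
        constructor <;> omega
      · rw [hinter_ne d hdc]; exact hB₁.1.2.2 d
    -- find a color where B₂ has more elements than B'
    have hsumlt : ∑ c, (B' ∩ Vc c).card < ∑ c, (B₂ ∩ Vc c).card := by
      rw [← card_eq_sum_inter hV hdisj hB'feas.1, ← card_eq_sum_inter hV hdisj hB₂.1.1,
        hB'card, hc1, hc2]
      omega
    obtain ⟨d, _, hd⟩ := Finset.exists_lt_of_sum_lt hsumlt
    have hns : ¬ B₂ ∩ Vc d ⊆ B' ∩ Vc d := fun h => absurd (card_le_card h) (not_le.mpr hd)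
    obtain ⟨y, hy, hynot⟩ := Finset.not_subset.mp hns
    obtain ⟨hyB₂, hyd⟩ := mem_inter.mp hy
    have hyB' : y ∉ B' := fun h => hynot (mem_inter.mpr ⟨h, hyd⟩)
    have hyx : y ≠ x := fun h => hx2 (h ▸ hyB₂)
    have hyB₁ : y ∉ B₁ := fun h => hyB' (mem_erase.mpr ⟨hyx, h⟩)
    refine ⟨y, mem_sdiff.mpr ⟨hyB₂, hyB₁⟩, ?_⟩
    have hcard : (insert y B').card = N := by
      rw [card_insert_of_notMem hyB', hB'card]
      omega
    refine maximal_of_card hV hdisj ⟨?_, ?_, ?_⟩ hcard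
    · intro a ha
      rcases mem_insert.mp ha with rfl | ha
      · exact hB₂.1.1 hyB₂
      · exact hB'feas.1 ha
    · rw [hcard]; exact min_le_left _ _
    · intro e
      by_cases hye : y ∈ Vc e
      · have hed : e = d := by
          by_contra hed
          exact Finset.disjoint_left.mp (hdisj e d hed) hye hyd
        subst hed
        have hynotin : y ∉ B' ∩ Vc e := fun h => hyB' (mem_inter.mp h).1
        rw [Finset.insert_inter_of_mem hye, card_insert_of_notMem hynotin]
        have hub := (hB₂.1.2.2 e).2
        have hlb := (hB'feas.2.2 e).1
        constructor <;> omega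
      · rw [Finset.insert_inter_of_notMem hye]
        exact hB'feas.2.2 e
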